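/- Let S^n be i.i.d. samples from P on ℝ^d, W ~ Unif([n]) independent of (S^n, Z) with Z ~ N(0, β²I_d), and Y = S_W + Z. Then h(P ∗ φ_β) − E[h(P̂_{S^n} ∗ φ_β)] = I(S^n; Y), the mutual information between the sample set and Y. -/

import Mathlib

open MeasureTheory ProbabilityTheory Real NNReal ENNReal

/-- Differential entropy of a measure on `ℝ^d`: `h(ν) = −E_ν[log dν/dLeb]`. -/
noncomputable def entMeas {d : ℕ} (ν : Measure (EuclideanSpace ℝ (Fin d))) : ℝ :=
  -∫ y, Real.log ((ν.rnDeriv volume y).toReal) ∂ν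

/-- The isotropic Gaussian measure `N(0, β²I_d)` on `EuclideanSpace ℝ (Fin d)`. -/
noncomputable def stdGaussianE (d : ℕ) (β : ℝ≥0) : Measure (EuclideanSpace ℝ (Fin d)) :=
  Measure.map (MeasurableEquiv.toLp 2 (Fin d → ℝ))
    (Measure.pi fun _ : Fin d => gaussianReal 0 (β ^ 2))

/-- The empirical measure of the samples `s : Fin n → ℝ^d`. -/
noncomputable def empMeasure {d n : ℕ} (s : Fin n → EuclideanSpace ℝ (Fin d)) :
    Measure (EuclideanSpace ℝ (Fin d)) :=
  (n : ℝ≥0∞)⁻¹ • ∑ i, Measure.dirac (s i)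

section Aux

variable {d n : ℕ}

instance stdGaussianE_isProb (d : ℕ) (β : ℝ≥0) : IsProbabilityMeasure (stdGaussianE d β) := by
  rw [stdGaussianE]
  exact Measure.isProbabilityMeasure_map (MeasurableEquiv.measurable _).aemeasurable

instance empMeasure_isProb [NeZero n] (s : Fin n → EuclideanSpace ℝ (Fin d)) :
    IsProbabilityMeasure (empMeasure s) := by
  constructor
  rw [empMeasure, Measure.smul_apply, Measure.finset_sum_apply, smul_eq_mul]
  simp only [Measure.dirac_apply_of_mem (Set.mem_univ _), Finset.sum_const, Finset.card_univ,
    Fintype.card_fin, nsmul_eq_mul, mul_one]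
  exact ENNReal.inv_mul_cancel (by exact_mod_cast NeZero.ne n) (by simp)

lemma measurable_convInt {β : ℝ≥0} {A : Set (EuclideanSpace ℝ (Fin d))} (hA : MeasurableSet A) :
    Measurable fun x : EuclideanSpace ℝ (Fin d) => stdGaussianE d β {z | x + z ∈ A} := by
  have ht : MeasurableSet
      {p : EuclideanSpace ℝ (Fin d) × EuclideanSpace ℝ (Fin d) | p.1 + p.2 ∈ A} :=
    measurable_add hA
  exact measurable_measure_prodMk_left ht

/-- The kernel `s ↦ P̂_s ∗ φ_β`, written as `n⁻¹ ∑ i, (s i + ·)_* G`. -/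
noncomputable def convKernel (d n : ℕ) (β : ℝ≥0) :
    Kernel (Fin n → EuclideanSpace ℝ (Fin d)) (EuclideanSpace ℝ (Fin d)) where
  toFun s := (n : ℝ≥0∞)⁻¹ • ∑ i, (stdGaussianE d β).map (fun z => s i + z)
  measurable' := by
    refine Measure.measurable_of_measurable_coe _ fun A hA => ?_
    simp only [Measure.smul_apply, Measure.finset_sum_apply, smul_eq_mul]
    refine Measurable.const_mul (Finset.measurable_sum _ fun i _ => ?_) _
    have h : ∀ s : Fin n → EuclideanSpace ℝ (Fin d),
        (stdGaussianE d β).map (fun z => s i + z) A = stdGaussianE d β {z | s i + z ∈ A} :=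
      fun s => Measure.map_apply (measurable_const_add _) hA
    simp_rw [h]
    exact (measurable_convInt hA).comp (measurable_pi_apply i)

lemma convKernel_apply_set {β : ℝ≥0} (s : Fin n → EuclideanSpace ℝ (Fin d))
    {A : Set (EuclideanSpace ℝ (Fin d))} (hA : MeasurableSet A) :
    convKernel d n β s A = (n : ℝ≥0∞)⁻¹ * ∑ i, stdGaussianE d β {z | s i + z ∈ A} := by
  show ((n : ℝ≥0∞)⁻¹ • ∑ i, (stdGaussianE d β).map (fun z => s i + z)) A = _
  rw [Measure.smul_apply, Measure.finset_sum_apply, smul_eq_mul]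
  congr 1
  exact Finset.sum_congr rfl fun i _ => Measure.map_apply (measurable_const_add _) hA

lemma convKernel_apply [NeZero n] {β : ℝ≥0} (s : Fin n → EuclideanSpace ℝ (Fin d)) :
    convKernel d n β s = (empMeasure s).conv (stdGaussianE d β) := by
  ext A hA
  have ht : MeasurableSet
      ((fun p : EuclideanSpace ℝ (Fin d) × EuclideanSpace ℝ (Fin d) => p.1 + p.2) ⁻¹' A) :=
    measurable_add hA
  have hg : Measurable fun x : EuclideanSpace ℝ (Fin d) => stdGaussianE d β {z | x + z ∈ A} :=
    measurable_convInt hA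
  rw [convKernel_apply_set s hA,
    show (empMeasure s).conv (stdGaussianE d β)
      = Measure.map (fun p : EuclideanSpace ℝ (Fin d) × EuclideanSpace ℝ (Fin d) => p.1 + p.2)
        ((empMeasure s).prod (stdGaussianE d β)) from rfl,
    Measure.map_apply measurable_add hA, Measure.prod_apply ht, empMeasure,
    lintegral_smul_measure, lintegral_finset_sum_measure]
  congr 1
  exact Finset.sum_congr rfl fun i _ => (lintegral_dirac' (s i) hg).symm

instance [NeZero n] (β : ℝ≥0) : IsMarkovKernel (convKernel d n β) :=
  ⟨fun s => by rw [convKernel_apply]; infer_instance⟩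

lemma pi_map_eval (P : Measure (EuclideanSpace ℝ (Fin d))) [IsProbabilityMeasure P] (i : Fin n) :
    (Measure.pi fun _ : Fin n => P).map (fun s => s i) = P := by
  ext A hA
  rw [Measure.map_apply (measurable_pi_apply i) hA]
  have hs : (fun s : Fin n → EuclideanSpace ℝ (Fin d) => s i) ⁻¹' A
      = Set.pi Set.univ (Function.update (fun _ : Fin n => (Set.univ : Set _)) i A) := by
    ext s
    simp only [Set.mem_preimage, Set.mem_univ_pi, Function.update_apply]
    constructor
    · intro h j
      by_cases hj : j = i
      · subst hj; simpa using h
      · simp [hj]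
    · intro h
      simpa using h i
  rw [hs, Measure.pi_pi]
  have h : ∀ j : Fin n,
      P (Function.update (fun _ : Fin n => (Set.univ : Set _)) i A j) = if j = i then P A else 1 := by
    intro j
    rw [Function.update_apply]
    split <;> simp
  rw [Finset.prod_congr rfl fun j _ => h j, Finset.prod_ite_eq' Finset.univ i fun _ => P A]
  simp

lemma joint_law [NeZero n] (β : ℝ≥0) (P : Measure (EuclideanSpace ℝ (Fin d)))
    [IsProbabilityMeasure P] :
    Measure.map
      (fun p : (Fin n → EuclideanSpace ℝ (Fin d)) × Fin n × EuclideanSpace ℝ (Fin d) =>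
        (p.1, p.1 p.2.1 + p.2.2))
      ((Measure.pi fun _ : Fin n => P).prod
        (((PMF.uniformOfFintype (Fin n)).toMeasure).prod (stdGaussianE d β)))
    = (Measure.pi fun _ : Fin n => P) ⊗ₘ convKernel d n β := by
  have happ : Measurable fun p : (Fin n → EuclideanSpace ℝ (Fin d)) × Fin n => p.1 p.2 :=
    measurable_from_prod_countable_left fun w => measurable_pi_apply w
  have hT : Measurable
      (fun p : (Fin n → EuclideanSpace ℝ (Fin d)) × Fin n × EuclideanSpace ℝ (Fin d) =>
        (p.1, p.1 p.2.1 + p.2.2)) :=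
    measurable_fst.prodMk
      ((happ.comp (measurable_fst.prodMk (measurable_fst.comp measurable_snd))).add
        (measurable_snd.comp measurable_snd))
  ext A hA
  rw [Measure.map_apply hT hA, Measure.prod_apply (hT hA), Measure.compProd_apply hA]
  refine lintegral_congr fun s => ?_
  have hsA : MeasurableSet (Prod.mk s ⁻¹'
      ((fun p : (Fin n → EuclideanSpace ℝ (Fin d)) × Fin n × EuclideanSpace ℝ (Fin d) =>
        (p.1, p.1 p.2.1 + p.2.2)) ⁻¹' A)) :=
    measurable_prodMk_left (hT hA)
  rw [Measure.prod_apply hsA, lintegral_fintype,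
    convKernel_apply_set s (measurable_prodMk_left hA), Finset.mul_sum]
  refine Finset.sum_congr rfl fun w _ => ?_
  have hU : (PMF.uniformOfFintype (Fin n)).toMeasure {w} = (n : ℝ≥0∞)⁻¹ := by
    rw [PMF.toMeasure_apply_singleton _ _ (measurableSet_singleton w),
      PMF.uniformOfFintype_apply]
    simp
  rw [hU, mul_comm]
  rfl

end Aux

/-- Bias identity for the plug-in estimator: with `S^n` i.i.d. from `P`, `W` uniform on `[n]`,
`Z ~ N(0, β²I_d)`, all independent, and `Y = S_W + Z`,
`h(P ∗ φ_β) − E[h(P̂_{S^n} ∗ φ_β)] = I(S^n; Y)`, where the mutual information is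
`I(S^n; Y) = h(Y) − h(Y | S^n)` with `h(Y | S^n)` the expected entropy of the conditional
law of `Y` given `S^n`. -/
theorem spBias_eq_mutualInfo {d n : ℕ} [NeZero n] (β : ℝ≥0) (hβ : 0 < β)
    {Ω : Type*} [MeasureSpace Ω] [IsProbabilityMeasure (ℙ : Measure Ω)]
    (P : Measure (EuclideanSpace ℝ (Fin d))) [IsProbabilityMeasure P]
    (S : Ω → (Fin n → EuclideanSpace ℝ (Fin d))) (W : Ω → Fin n)
    (Z : Ω → EuclideanSpace ℝ (Fin d))
    (hS : Measurable S) (hW : Measurable W) (hZ : Measurable Z)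
    (hjoint : Measure.map (fun ω => (S ω, W ω, Z ω)) ℙ =
      (Measure.pi fun _ : Fin n => P).prod
        (((PMF.uniformOfFintype (Fin n)).toMeasure).prod (stdGaussianE d β))) :
    entMeas (P.conv (stdGaussianE d β)) -
        ∫ ω, entMeas ((empMeasure (S ω)).conv (stdGaussianE d β)) =
      entMeas (Measure.map (fun ω => S ω (W ω) + Z ω) ℙ) -
        ∫ ω, entMeas ((condDistrib (fun ω' => S ω' (W ω') + Z ω') S ℙ) (S ω)) := by
  have happ : Measurable fun p : (Fin n → EuclideanSpace ℝ (Fin d)) × Fin n => p.1 p.2 :=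
    measurable_from_prod_countable_left fun w => measurable_pi_apply w
  have hYm : Measurable fun ω => S ω (W ω) + Z ω :=
    (happ.comp (hS.prodMk hW)).add hZ
  have hT : Measurable
      (fun p : (Fin n → EuclideanSpace ℝ (Fin d)) × Fin n × EuclideanSpace ℝ (Fin d) =>
        (p.1, p.1 p.2.1 + p.2.2)) :=
    measurable_fst.prodMk
      ((happ.comp (measurable_fst.prodMk (measurable_fst.comp measurable_snd))).add
        (measurable_snd.comp measurable_snd))
  have hSWZ : Measurable fun ω => (S ω, W ω, Z ω) := hS.prodMk (hW.prodMk hZ)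
  -- law of (S, Y)
  have hSY : Measure.map (fun ω => (S ω, S ω (W ω) + Z ω)) ℙ
      = (Measure.pi fun _ : Fin n => P) ⊗ₘ convKernel d n β := by
    have hcomp : (fun ω => (S ω, S ω (W ω) + Z ω))
        = (fun p : (Fin n → EuclideanSpace ℝ (Fin d)) × Fin n × EuclideanSpace ℝ (Fin d) =>
            (p.1, p.1 p.2.1 + p.2.2)) ∘ fun ω => (S ω, W ω, Z ω) := rfl
    rw [hcomp, ← Measure.map_map hT hSWZ, hjoint, joint_law]
  -- law of S
  have hmapS : Measure.map S ℙ = Measure.pi fun _ : Fin n => P := by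
    have hc : S = Prod.fst ∘ fun ω => (S ω, W ω, Z ω) := rfl
    rw [hc, ← Measure.map_map measurable_fst hSWZ, hjoint]
    exact Measure.fst_prod
  -- the conditional distribution is a.e. the convolution kernel
  have hcd : ∀ᵐ x ∂(Measure.map S ℙ),
      convKernel d n β x = condDistrib (fun ω' => S ω' (W ω') + Z ω') S ℙ x :=
    (condDistrib_ae_eq_of_measure_eq_compProd_of_measurable hS hYm (by rw [hmapS]; exact hSY)).mono
      fun x h => h.symm
  have hcd' : ∀ᵐ ω ∂(ℙ : Measure Ω),
      convKernel d n β (S ω) = condDistrib (fun ω' => S ω' (W ω') + Z ω') S ℙ (S ω) :=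
    ae_of_ae_map hS.aemeasurable hcd
  -- law of Y
  have hY : Measure.map (fun ω => S ω (W ω) + Z ω) ℙ = P.conv (stdGaussianE d β) := by
    have h1 : (fun ω => S ω (W ω) + Z ω)
        = Prod.snd ∘ fun ω => (S ω, S ω (W ω) + Z ω) := rfl
    rw [h1, ← Measure.map_map measurable_snd (hS.prodMk hYm), hSY]
    ext A hA
    have hg : Measurable fun x : EuclideanSpace ℝ (Fin d) =>
        stdGaussianE d β {z | x + z ∈ A} := measurable_convInt hA
    rw [Measure.map_apply measurable_snd hA, Measure.compProd_apply (measurable_snd hA)]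
    have hκ : ∀ s : Fin n → EuclideanSpace ℝ (Fin d),
        convKernel d n β s (Prod.mk s ⁻¹' (Prod.snd ⁻¹' A))
          = (n : ℝ≥0∞)⁻¹ * ∑ i, stdGaussianE d β {z | s i + z ∈ A} :=
      fun s => convKernel_apply_set s hA
    calc
      ∫⁻ s, convKernel d n β s (Prod.mk s ⁻¹' (Prod.snd ⁻¹' A))
          ∂(Measure.pi fun _ : Fin n => P)
          = ∫⁻ s, (n : ℝ≥0∞)⁻¹ * ∑ i, stdGaussianE d β {z | s i + z ∈ A}
              ∂(Measure.pi fun _ : Fin n => P) := lintegral_congr fun s => hκ s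
      _ = (n : ℝ≥0∞)⁻¹ * ∑ i : Fin n, ∫⁻ s, stdGaussianE d β {z | s i + z ∈ A}
              ∂(Measure.pi fun _ : Fin n => P) := by
            have hmi : ∀ i : Fin n, Measurable fun s : Fin n → EuclideanSpace ℝ (Fin d) =>
                stdGaussianE d β {z | s i + z ∈ A} :=
              fun i => hg.comp (measurable_pi_apply i)
            have hm : Measurable fun s : Fin n → EuclideanSpace ℝ (Fin d) =>
                ∑ i : Fin n, stdGaussianE d β {z | s i + z ∈ A} :=
              Finset.measurable_sum _ fun i _ => hmi i
            rw [lintegral_const_mul _ hm, lintegral_finset_sum _ fun i _ => hmi i]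
      _ = (n : ℝ≥0∞)⁻¹ * ∑ _i : Fin n, ∫⁻ x, stdGaussianE d β {z | x + z ∈ A} ∂P := by
            congr 1
            refine Finset.sum_congr rfl fun i _ => ?_
            conv_rhs => rw [← pi_map_eval P i]
            exact (lintegral_map hg (measurable_pi_apply i)).symm
      _ = ∫⁻ x, stdGaussianE d β {z | x + z ∈ A} ∂P := by
            rw [Finset.sum_const, Finset.card_univ, Fintype.card_fin, nsmul_eq_mul, ← mul_assoc,
              ENNReal.inv_mul_cancel (by exact_mod_cast NeZero.ne n) (by simp), one_mul]
      _ = (P.conv (stdGaussianE d β)) A := by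
            rw [show P.conv (stdGaussianE d β)
                = Measure.map
                  (fun p : EuclideanSpace ℝ (Fin d) × EuclideanSpace ℝ (Fin d) => p.1 + p.2)
                  (P.prod (stdGaussianE d β)) from rfl,
              Measure.map_apply measurable_add hA, Measure.prod_apply (measurable_add hA)]
            rfl
  rw [hY]
  have hint : ∫ ω, entMeas ((empMeasure (S ω)).conv (stdGaussianE d β)) =
      ∫ ω, entMeas ((condDistrib (fun ω' => S ω' (W ω') + Z ω') S ℙ) (S ω)) := by
    refine integral_congr_ae (hcd'.mono fun ω h => ?_)
    show entMeas ((empMeasure (S ω)).conv (stdGaussianE d β))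
      = entMeas ((condDistrib (fun ω' => S ω' (W ω') + Z ω') S ℙ) (S ω))
    rw [← h, convKernel_apply]
  rw [hint]
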